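/- One-step Stratonovich consistency of Heun's method for SDEs with constant-in-time smooth coefficients: for the scheme x* = xₙ + Δt f(xₙ) + ΔW g(xₙ), x_{n+1} = xₙ + (Δt/2)(f(xₙ)+f(x*)) + (ΔW/2)(g(xₙ)+g(x*)), with f, g : ℝ → ℝ twice continuously differentiable with bounded derivatives and ΔW ~ N(0, Δt), one has x_{n+1} = xₙ + Δt f(xₙ) + ΔW g(xₙ) + (ΔW²/2) g(xₙ) g'(xₙ) + R, where E[R²] ≤ C (Δt)³ for a constant C depending only on bounds of f, g and their derivatives. -/

import Mathlib

open MeasureTheory ProbabilityTheory Real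
open scoped NNReal
set_option maxHeartbeats 1000000

lemma aux_lip {φ : ℝ → ℝ} (hφ : Differentiable ℝ φ) {C : ℝ}
    (hC : ∀ x, |deriv φ x| ≤ C) (x y : ℝ) : |φ y - φ x| ≤ C * |y - x| := by
  have := Convex.norm_image_sub_le_of_norm_deriv_le (f := φ) (s := Set.univ)
    (fun z _ => hφ z) (fun z _ => hC z) convex_univ (Set.mem_univ x) (Set.mem_univ y)
  simpa [Real.norm_eq_abs] using this

lemma aux_taylor {φ : ℝ → ℝ} (hφ : Differentiable ℝ φ) {C : ℝ} (hC0 : 0 ≤ C)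
    (hC : ∀ x y, |deriv φ y - deriv φ x| ≤ C * |y - x|) (x h : ℝ) :
    |φ (x + h) - φ x - deriv φ x * h| ≤ C * h ^ 2 := by
  set a := deriv φ x with ha
  have hψ : Differentiable ℝ (fun y => φ y - a * y) :=
    hφ.sub (differentiable_id.const_mul a)
  have hd : ∀ y, deriv (fun y => φ y - a * y) y = deriv φ y - a := by
    intro y
    have : HasDerivAt (fun y => φ y - a * y) (deriv φ y - a) y := by
      have h := ((hφ y).hasDerivAt.sub ((hasDerivAt_id y).const_mul a))
      simp only [mul_one] at h
      exact h
    exact this.deriv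
  have key := Convex.norm_image_sub_le_of_norm_deriv_le (f := fun y => φ y - a * y)
    (s := Set.uIcc x (x + h)) (C := C * |h|) (fun z _ => hψ z)
    (fun z hz => ?_) (convex_uIcc _ _) Set.left_mem_uIcc Set.right_mem_uIcc
  · rw [Real.norm_eq_abs] at key
    have : |φ (x+h) - a*(x+h) - (φ x - a * x)| ≤ C * |h| * |x + h - x| := by
      simpa [Real.norm_eq_abs] using key
    calc |φ (x + h) - φ x - a * h| = |φ (x+h) - a*(x+h) - (φ x - a * x)| := by ring_nf
      _ ≤ C * |h| * |x + h - x| := this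
      _ = C * h ^ 2 := by
        rw [show x + h - x = h by ring, show C * |h| * |h| = C * (|h| * |h|) by ring,
          ← sq (|h|), sq_abs]
  · rw [hd z, Real.norm_eq_abs]
    have h1 := hC x z
    have h2 : |z - x| ≤ |h| := by
      rcases Set.mem_uIcc.mp hz with ⟨h3, h4⟩ | ⟨h3, h4⟩
      · rw [abs_of_nonneg (by linarith)]
        have : 0 ≤ h := by linarith
        rw [abs_of_nonneg this]; linarith
      · rw [abs_of_nonpos (by linarith)]
        have : h ≤ 0 := by linarith
        rw [abs_of_nonpos this]; linarith
    calc |deriv φ z - a| ≤ C * |z - x| := h1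
      _ ≤ C * |h| := by exact mul_le_mul_of_nonneg_left h2 hC0

lemma integrable_pow_gaussian_one (n : ℕ) :
    Integrable (fun x : ℝ => x ^ (2 * n)) (gaussianReal 0 1) := by
  rw [gaussianReal_of_var_ne_zero 0 one_ne_zero,
    integrable_withDensity_iff (measurable_gaussianPDF 0 1)
      (Filter.Eventually.of_forall fun x => ENNReal.ofReal_lt_top)]
  apply Integrable.mono' ((integrable_exp_neg_mul_sq (by norm_num : (0:ℝ) < 1/4)).const_mul
    ((Real.sqrt (2*π))⁻¹ * (n.factorial * 4 ^ n)))
  · exact ((measurable_id.pow_const _).mul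
      ((measurable_gaussianPDF 0 1).ennreal_toReal)).aestronglyMeasurable
  · filter_upwards with x
    have heq : (gaussianPDF 0 1 x).toReal = gaussianPDFReal 0 1 x :=
      ENNReal.toReal_ofReal (gaussianPDFReal_nonneg 0 1 x)
    rw [Real.norm_eq_abs, heq]
    have hpdf : gaussianPDFReal 0 1 x = (Real.sqrt (2*π))⁻¹ * Real.exp (-(x^2/2)) := by
      unfold gaussianPDFReal
      push_cast
      norm_num
      left
      ring
    have hx2 : x ^ (2*n) ≤ (n.factorial : ℝ) * 4 ^ n * Real.exp (x^2/4) := by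
      have h1 := Real.pow_div_factorial_le_exp (x := x^2/4) (by positivity) n
      have h2 : (x^2/4)^n ≤ (n.factorial : ℝ) * Real.exp (x^2/4) := by
        rw [div_le_iff₀ (by positivity : (0:ℝ) < (n.factorial:ℝ))] at h1
        linarith [h1]
      calc x ^ (2*n) = 4^n * (x^2/4)^n := by
            rw [pow_mul, ← mul_pow]; ring_nf
        _ ≤ 4^n * ((n.factorial : ℝ) * Real.exp (x^2/4)) := by
            apply mul_le_mul_of_nonneg_left h2 (by positivity)
        _ = (n.factorial : ℝ) * 4 ^ n * Real.exp (x^2/4) := by ring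
    have hnn : 0 ≤ x ^ (2*n) * gaussianPDFReal 0 1 x :=
      mul_nonneg (by rw [pow_mul]; positivity) (gaussianPDFReal_nonneg 0 1 x)
    rw [abs_of_nonneg hnn, hpdf]
    have key : x ^ (2*n) * Real.exp (-(x^2/2)) ≤
        (n.factorial : ℝ) * 4 ^ n * Real.exp (-(1/4) * x^2) := by
      calc x ^ (2*n) * Real.exp (-(x^2/2))
          ≤ ((n.factorial : ℝ) * 4 ^ n * Real.exp (x^2/4)) * Real.exp (-(x^2/2)) :=
            mul_le_mul_of_nonneg_right hx2 (Real.exp_pos _).le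
        _ = (n.factorial : ℝ) * 4 ^ n * Real.exp (-(1/4) * x^2) := by
            rw [mul_assoc, ← Real.exp_add]; ring_nf
    calc x ^ (2*n) * ((Real.sqrt (2*π))⁻¹ * Real.exp (-(x^2/2)))
        = (Real.sqrt (2*π))⁻¹ * (x ^ (2*n) * Real.exp (-(x^2/2))) := by ring
      _ ≤ (Real.sqrt (2*π))⁻¹ * ((n.factorial : ℝ) * 4 ^ n * Real.exp (-(1/4) * x^2)) := by
          apply mul_le_mul_of_nonneg_left key (by positivity)
      _ = (Real.sqrt (2*π))⁻¹ * (↑n.factorial * 4 ^ n) * Real.exp (-(1/4) * x^2) := by ring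

lemma gaussian_scale (v : ℝ≥0) :
    gaussianReal 0 v = (gaussianReal 0 1).map (fun x => Real.sqrt v * x) := by
  rw [show (fun x : ℝ => Real.sqrt v * x) = (Real.sqrt v * ·) from rfl,
    gaussianReal_map_const_mul]
  congr 1
  · simp
  · ext
    simp [Real.sq_sqrt (v.coe_nonneg)]

lemma integrable_pow_gaussian (v : ℝ≥0) (n : ℕ) :
    Integrable (fun x : ℝ => x ^ (2 * n)) (gaussianReal 0 v) := by
  rw [gaussian_scale v]
  have hmeas : Measurable (fun x : ℝ => Real.sqrt v * x) := measurable_id.const_mul _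
  have hsm : AEStronglyMeasurable (fun x : ℝ => x ^ (2*n))
      ((gaussianReal 0 1).map (fun x => Real.sqrt v * x)) :=
    (measurable_id.pow_const _).aestronglyMeasurable
  rw [integrable_map_measure hsm hmeas.aemeasurable]
  have : ((fun x : ℝ => x ^ (2*n)) ∘ (fun x => Real.sqrt v * x))
      = fun x => (Real.sqrt v)^(2*n) * x^(2*n) := by
    funext y; simp [mul_pow]
  rw [this]
  exact (integrable_pow_gaussian_one n).const_mul _

lemma integral_pow_gaussian (v : ℝ≥0) (n : ℕ) :
    ∫ x, x ^ (2 * n) ∂(gaussianReal 0 v)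
      = (v:ℝ)^n * ∫ x, x ^ (2*n) ∂(gaussianReal 0 1) := by
  rw [gaussian_scale v]
  have hmeas : Measurable (fun x : ℝ => Real.sqrt v * x) := measurable_id.const_mul _
  have hsm : AEStronglyMeasurable (fun x : ℝ => x ^ (2*n))
      ((gaussianReal 0 1).map (fun x => Real.sqrt v * x)) :=
    (measurable_id.pow_const _).aestronglyMeasurable
  rw [integral_map hmeas.aemeasurable hsm]
  simp_rw [mul_pow]
  rw [integral_const_mul]
  congr 1
  rw [pow_mul, Real.sq_sqrt v.coe_nonneg]

/-- One-step Stratonovich consistency of Heun's (improved Euler) method for the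
SDE `dx = f(x) dt + g(x) ∘ dW` with time-independent `C²` coefficients having
bounded values and derivatives.  For the scheme
`x* = xₙ + Δt f(xₙ) + ΔW g(xₙ)`,
`x_{n+1} = xₙ + (Δt/2)(f(xₙ) + f(x*)) + (ΔW/2)(g(xₙ) + g(x*))`
with `ΔW ~ N(0, Δt)`, the one-step remainder
`R = x_{n+1} - xₙ - Δt f(xₙ) - ΔW g(xₙ) - (ΔW²/2) g(xₙ) g'(xₙ)`
satisfies `E[R²] ≤ C (Δt)³`, for a constant `C` depending only on the bound
`M` on `f`, `g` and their first and second derivatives. -/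
theorem heun_stratonovich_consistency
    (f g : ℝ → ℝ) (hf : ContDiff ℝ 2 f) (hg : ContDiff ℝ 2 g)
    (M : ℝ)
    (hbd : ∀ x, |f x| ≤ M ∧ |g x| ≤ M ∧ |deriv f x| ≤ M ∧ |deriv g x| ≤ M ∧
      |deriv (deriv f) x| ≤ M ∧ |deriv (deriv g) x| ≤ M) :
    ∃ C : ℝ, 0 < C ∧
      ∀ {Ω : Type} [inst : MeasurableSpace Ω] (P : Measure Ω)
        [IsProbabilityMeasure P]
        (Δt : NNReal) (_hΔt : (Δt : ℝ) ≤ 1) (ΔW : Ω → ℝ)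
        (_hmeas : Measurable ΔW)
        (_hlaw : Measure.map ΔW P = gaussianReal 0 Δt) (xn : ℝ),
      ∫ ω,
        ((xn + (Δt : ℝ) / 2 * (f xn + f (xn + Δt * f xn + ΔW ω * g xn))
            + ΔW ω / 2 * (g xn + g (xn + Δt * f xn + ΔW ω * g xn)))
          - (xn + (Δt : ℝ) * f xn + ΔW ω * g xn
            + (ΔW ω) ^ 2 / 2 * (g xn * deriv g xn))) ^ 2 ∂P
        ≤ C * (Δt : ℝ) ^ 3 := by
  set K : ℝ := max M 1 with hKdef
  have hK1 : (1:ℝ) ≤ K := le_max_right _ _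
  have hK0 : (0:ℝ) ≤ K := zero_le_one.trans hK1
  have hMK : M ≤ K := le_max_left _ _
  -- constants from Gaussian moments
  set c1 : ℝ := ∫ x, x ^ (2*1) ∂(gaussianReal 0 1) with hc1def
  set c2 : ℝ := ∫ x, x ^ (2*2) ∂(gaussianReal 0 1) with hc2def
  set c3 : ℝ := ∫ x, x ^ (2*3) ∂(gaussianReal 0 1) with hc3def
  have hc1 : 0 ≤ c1 := integral_nonneg fun x => by rw [pow_mul]; positivity
  have hc2 : 0 ≤ c2 := integral_nonneg fun x => by rw [pow_mul]; positivity
  have hc3 : 0 ≤ c3 := integral_nonneg fun x => by rw [pow_mul]; positivity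
  refine ⟨K^6 * (1 + 9*c1 + 4*c2 + c3), by positivity, ?_⟩
  intro Ω inst P instP Δt hΔt ΔW hW hlaw xn
  set a : ℝ := (Δt : ℝ) with hadef
  have ha0 : 0 ≤ a := Δt.coe_nonneg
  have ha1 : a ≤ 1 := hΔt
  -- differentiability
  have hfd : Differentiable ℝ f := hf.differentiable (by norm_num)
  have hgd : Differentiable ℝ g := hg.differentiable (by norm_num)
  have hgd' : Differentiable ℝ (deriv g) := by
    have h2 : ContDiff ℝ (1+1) g := by norm_num; exact hg
    exact (contDiff_succ_iff_deriv.mp h2).2.2.differentiable one_ne_zero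
  -- Lipschitz / Taylor bounds
  have hlipf : ∀ x y, |f y - f x| ≤ K * |y - x| :=
    aux_lip hfd (fun x => (hbd x).2.2.1.trans hMK)
  have hlipg' : ∀ x y, |deriv g y - deriv g x| ≤ K * |y - x| :=
    aux_lip hgd' (fun x => (hbd x).2.2.2.2.2.trans hMK)
  have htay : ∀ x h, |g (x + h) - g x - deriv g x * h| ≤ K * h ^ 2 :=
    aux_taylor hgd hK0 hlipg'
  -- integrability of moments of ΔW
  have hsm : ∀ n : ℕ, AEStronglyMeasurable (fun x : ℝ => x ^ (2*n)) (Measure.map ΔW P) :=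
    fun n => (measurable_id.pow_const _).aestronglyMeasurable
  have hInt : ∀ n : ℕ, Integrable (fun ω => (ΔW ω) ^ (2*n)) P := by
    intro n
    have := (integrable_map_measure (hsm n) hW.aemeasurable).mp
      (by rw [hlaw]; exact integrable_pow_gaussian Δt n)
    exact this
  have hval : ∀ n : ℕ, ∫ ω, (ΔW ω) ^ (2*n) ∂P
      = a^n * ∫ x, x ^ (2*n) ∂(gaussianReal 0 1) := by
    intro n
    have h1 : ∫ ω, (ΔW ω) ^ (2*n) ∂P = ∫ x, x ^ (2*n) ∂(Measure.map ΔW P) :=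
      (integral_map hW.aemeasurable (hsm n)).symm
    rw [h1, hlaw, integral_pow_gaussian]
  -- pointwise bound
  have hpt : ∀ ω : Ω,
      ((xn + a / 2 * (f xn + f (xn + a * f xn + ΔW ω * g xn))
          + ΔW ω / 2 * (g xn + g (xn + a * f xn + ΔW ω * g xn)))
        - (xn + a * f xn + ΔW ω * g xn
          + (ΔW ω) ^ 2 / 2 * (g xn * deriv g xn))) ^ 2
      ≤ K^6 * (a^4 + 9*a^2*(ΔW ω)^2 + 4*a^2*(ΔW ω)^4 + (ΔW ω)^6) := by
    intro ω
    set w : ℝ := ΔW ω with hwdef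
    set b : ℝ := |w| with hbdef
    have hb0 : 0 ≤ b := abs_nonneg w
    set h : ℝ := a * f xn + w * g xn with hhdef
    set xs : ℝ := xn + h with hxsdef
    -- bound on h
    have hh : |h| ≤ K * (a + b) := by
      calc |h| ≤ |a * f xn| + |w * g xn| := abs_add_le _ _
        _ = a * |f xn| + b * |g xn| := by
            rw [abs_mul, abs_mul, abs_of_nonneg ha0, hbdef]
        _ ≤ a * K + b * K := by
            have := ((hbd xn).1).trans hMK
            have := ((hbd xn).2.1).trans hMK
            gcongr <;> first
              | exact ((hbd xn).1).trans hMK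
              | exact ((hbd xn).2.1).trans hMK
        _ = K * (a + b) := by ring
    have hh2 : h^2 ≤ K^2 * (a + b)^2 := by
      calc h^2 = |h|^2 := (sq_abs h).symm
        _ ≤ (K * (a+b))^2 := by
            apply pow_le_pow_left₀ (abs_nonneg h) hh
        _ = K^2 * (a+b)^2 := by ring
    -- the three error terms
    have e1 : |a / 2 * (f xs - f xn)| ≤ K^2/2 * (a^2 + a*b) := by
      rw [abs_mul, abs_of_nonneg (by linarith : (0:ℝ) ≤ a / 2)]
      calc a/2 * |f xs - f xn| ≤ a/2 * (K * |xs - xn|) := by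
            gcongr; exact hlipf xn xs
        _ = a/2 * (K * |h|) := by rw [show xs - xn = h by rw [hxsdef]; ring]
        _ ≤ a/2 * (K * (K * (a + b))) := by gcongr
        _ = K^2/2 * (a^2 + a*b) := by ring
    have e2 : |w / 2 * (g xs - g xn - deriv g xn * h)| ≤ K^3/2 * (b*(a+b)^2) := by
      rw [abs_mul]
      have : |w / 2| = b / 2 := by rw [abs_div, hbdef]; simp
      rw [this]
      calc b/2 * |g xs - g xn - deriv g xn * h| ≤ b/2 * (K * h^2) := by
            gcongr; exact htay xn h
        _ ≤ b/2 * (K * (K^2 * (a+b)^2)) := by gcongr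
        _ = K^3/2 * (b*(a+b)^2) := by ring
    have e3 : |a * w / 2 * (deriv g xn * f xn)| ≤ K^2/2 * (a*b) := by
      rw [abs_mul, abs_mul, abs_div, abs_mul, abs_of_nonneg ha0]
      simp only [abs_two]
      calc a * b / 2 * (|deriv g xn| * |f xn|) ≤ a * b / 2 * (K * K) := by
            gcongr
            · exact ((hbd xn).2.2.2.1).trans hMK
            · exact ((hbd xn).1).trans hMK
        _ = K^2/2 * (a*b) := by ring
    -- algebraic identity
    set R : ℝ := (xn + a / 2 * (f xn + f xs) + w / 2 * (g xn + g xs))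
        - (xn + a * f xn + w * g xn + w ^ 2 / 2 * (g xn * deriv g xn)) with hRdef
    have hid : R = a / 2 * (f xs - f xn) + w / 2 * (g xs - g xn - deriv g xn * h)
        + a * w / 2 * (deriv g xn * f xn) := by
      rw [hRdef, hhdef]; ring
    have hRabs : |R| ≤ K^3/2 * (a^2 + 3*(a*b) + 2*(a*b^2) + b^3) := by
      have habs : |R| ≤ K^2/2 * (a^2 + a*b) + K^3/2 * (b*(a+b)^2) + K^2/2 * (a*b) := by
        rw [hid]
        calc |a / 2 * (f xs - f xn) + w / 2 * (g xs - g xn - deriv g xn * h)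
              + a * w / 2 * (deriv g xn * f xn)|
            ≤ |a / 2 * (f xs - f xn) + w / 2 * (g xs - g xn - deriv g xn * h)|
              + |a * w / 2 * (deriv g xn * f xn)| := abs_add_le _ _
          _ ≤ |a / 2 * (f xs - f xn)| + |w / 2 * (g xs - g xn - deriv g xn * h)|
              + |a * w / 2 * (deriv g xn * f xn)| := by
                have := abs_add_le (a / 2 * (f xs - f xn)) (w / 2 * (g xs - g xn - deriv g xn * h))
                linarith
          _ ≤ K^2/2 * (a^2 + a*b) + K^3/2 * (b*(a+b)^2) + K^2/2 * (a*b) := by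
                linarith [e1, e2, e3]
      have hKK : K^2/2 ≤ K^3/2 := by
        nlinarith [mul_nonneg (sq_nonneg K) (sub_nonneg.mpr hK1)]
      have hX1 : (0:ℝ) ≤ a^2 + a*b := add_nonneg (sq_nonneg a) (mul_nonneg ha0 hb0)
      have t1 : K^2/2*(a^2 + a*b) ≤ K^3/2*(a^2 + a*b) :=
        mul_le_mul_of_nonneg_right hKK hX1
      have t3 : K^2/2*(a*b) ≤ K^3/2*(a*b) :=
        mul_le_mul_of_nonneg_right hKK (mul_nonneg ha0 hb0)
      have s2 : b*(a+b)^2 ≤ a*b + 2*(a*b^2) + b^3 := by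
        nlinarith [mul_nonneg (mul_nonneg ha0 hb0) (sub_nonneg.mpr ha1)]
      have t2 : K^3/2*(b*(a+b)^2) ≤ K^3/2*(a*b + 2*(a*b^2) + b^3) :=
        mul_le_mul_of_nonneg_left s2 (by positivity)
      linarith [habs, t1, t2, t3]
    -- square it
    have hsq : R^2 ≤ (K^3/2 * (a^2 + 3*(a*b) + 2*(a*b^2) + b^3))^2 := by
      rw [← sq_abs R]
      exact pow_le_pow_left₀ (abs_nonneg R) hRabs 2
    have hb2 : b^2 = w^2 := sq_abs w
    have hfin : (K^3/2 * (a^2 + 3*(a*b) + 2*(a*b^2) + b^3))^2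
        ≤ K^6 * (a^4 + 9*a^2*w^2 + 4*a^2*w^4 + w^6) := by
      have hb4 : b^4 = w^4 := by
        rw [show (4:ℕ) = 2*2 by norm_num, pow_mul, pow_mul, hb2]
      have hb6 : b^6 = w^6 := by
        rw [show (6:ℕ) = 2*3 by norm_num, pow_mul, pow_mul, hb2]
      have key : (a^2 + 3*(a*b) + 2*(a*b^2) + b^3)^2
          ≤ 4 * (a^4 + 9*a^2*b^2 + 4*a^2*b^4 + b^6) := by
        linarith [sq_nonneg (a^2 - 3*(a*b)), sq_nonneg (a^2 - 2*(a*b^2)),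
          sq_nonneg (a^2 - b^3), sq_nonneg (3*(a*b) - 2*(a*b^2)),
          sq_nonneg (3*(a*b) - b^3), sq_nonneg (2*(a*b^2) - b^3)]
      calc (K^3/2 * (a^2 + 3*(a*b) + 2*(a*b^2) + b^3))^2
          = K^6/4 * (a^2 + 3*(a*b) + 2*(a*b^2) + b^3)^2 := by ring
        _ ≤ K^6/4 * (4 * (a^4 + 9*a^2*b^2 + 4*a^2*b^4 + b^6)) := by
            apply mul_le_mul_of_nonneg_left key (by positivity)
        _ = K^6 * (a^4 + 9*a^2*b^2 + 4*a^2*b^4 + b^6) := by ring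
        _ = K^6 * (a^4 + 9*a^2*w^2 + 4*a^2*w^4 + w^6) := by rw [hb2, hb4, hb6]
    calc ((xn + a / 2 * (f xn + f (xn + a * f xn + w * g xn))
          + w / 2 * (g xn + g (xn + a * f xn + w * g xn)))
        - (xn + a * f xn + w * g xn + w ^ 2 / 2 * (g xn * deriv g xn))) ^ 2 = R^2 := by
          rw [hRdef, hxsdef, hhdef]
          ring_nf
      _ ≤ _ := le_trans hsq hfin
  -- integrable majorant
  have hInt2 : Integrable (fun ω => (ΔW ω)^2) P := by simpa using hInt 1
  have hInt4 : Integrable (fun ω => (ΔW ω)^4) P := by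
    have := hInt 2; norm_num at this; exact this
  have hInt6 : Integrable (fun ω => (ΔW ω)^6) P := by
    have := hInt 3; norm_num at this; exact this
  have hGint : Integrable (fun ω =>
      K^6 * (a^4 + 9*a^2*(ΔW ω)^2 + 4*a^2*(ΔW ω)^4 + (ΔW ω)^6)) P := by
    exact ((((integrable_const (a^4)).add (hInt2.const_mul (9*a^2))).add
      (hInt4.const_mul (4*a^2))).add hInt6).const_mul (K^6)
  refine le_trans (integral_mono_of_nonneg (Filter.Eventually.of_forall fun ω => sq_nonneg _)
    hGint (Filter.Eventually.of_forall hpt)) ?_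
  have h2 : ∫ ω, (ΔW ω)^2 ∂P = a * c1 := by
    have h := hval 1
    rw [← hc1def] at h
    simpa using h
  have h4 : ∫ ω, (ΔW ω)^4 ∂P = a^2 * c2 := by
    have h := hval 2
    rw [← hc2def] at h
    norm_num at h
    exact h
  have h6 : ∫ ω, (ΔW ω)^6 ∂P = a^3 * c3 := by
    have h := hval 3
    rw [← hc3def] at h
    norm_num at h
    exact h
  have A1 : Integrable (fun ω => a^4 + 9*a^2*(ΔW ω)^2) P :=
    (integrable_const _).add (hInt2.const_mul _)
  have A2 : Integrable (fun ω => a^4 + 9*a^2*(ΔW ω)^2 + 4*a^2*(ΔW ω)^4) P :=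
    A1.add (hInt4.const_mul _)
  rw [integral_const_mul, integral_add A2 hInt6, integral_add A1 (hInt4.const_mul _),
    integral_add (integrable_const _) (hInt2.const_mul _),
    integral_const, integral_const_mul, integral_const_mul, h2, h4, h6]
  simp only [probReal_univ, smul_eq_mul, one_mul]
  have ha43 : a^4 ≤ a^3 := by nlinarith [pow_nonneg ha0 3]
  have h5 : a^4*c2 ≤ a^3*c2 := mul_le_mul_of_nonneg_right ha43 hc2
  have h7 : a^4*c1 ≤ a^3*c1 := mul_le_mul_of_nonneg_right ha43 hc1
  have hfin2 : a^4 + 9*a^2*(a*c1) + 4*a^2*(a^2*c2) + a^3*c3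
      ≤ (1 + 9*c1 + 4*c2 + c3) * a^3 := by linarith [ha43, h5]
  calc K^6 * (a^4 + 9*a^2*(a*c1) + 4*a^2*(a^2*c2) + a^3*c3)
      ≤ K^6 * ((1 + 9*c1 + 4*c2 + c3) * a^3) :=
        mul_le_mul_of_nonneg_left hfin2 (by positivity)
    _ = K^6*(1+9*c1+4*c2+c3) * a^3 := by ring
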